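/- Let γ : [0, π] → ℝ^{n+1} be a C¹ unit-speed curve on the unit sphere (‖γ(t)‖ = 1, ‖γ'(t)‖ = 1 for all t) whose endpoints are antipodal: γ(π) = −γ(0). Then γ is an arc of a great circle; explicitly, γ(t) = cos(t)·γ(0) + sin(t)·γ'(0) for all t ∈ [0, π]. -/

import Mathlib

open Real Set

set_option maxHeartbeats 1000000

local notation "⟪" x ", " y "⟫" => @inner ℝ _ _ x y

/-- A C¹ unit-speed curve of length `π` on the unit sphere joining a pair of antipodal
points is an arc of a great circle: `γ t = cos t • γ 0 + sin t • γ'(0)`. -/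
theorem antipodal_unit_speed_curve_is_great_circle {n : ℕ}
    (γ : ℝ → EuclideanSpace ℝ (Fin (n + 1)))
    (hγ : ContDiffOn ℝ 1 γ (Icc 0 π))
    (hsphere : ∀ t ∈ Icc 0 π, ‖γ t‖ = 1)
    (hspeed : ∀ t ∈ Icc 0 π, ‖derivWithin γ (Icc 0 π) t‖ = 1)
    (hanti : γ π = -γ 0) :
    ∀ t ∈ Icc 0 π,
      γ t = Real.cos t • γ 0 + Real.sin t • derivWithin γ (Icc 0 π) 0 := by
  have hπ : (0:ℝ) < π := Real.pi_pos
  have h0mem : (0:ℝ) ∈ Icc 0 π := ⟨le_rfl, hπ.le⟩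
  have hπmem : π ∈ Icc 0 π := ⟨hπ.le, le_rfl⟩
  have hUD : UniqueDiffOn ℝ (Icc 0 π) := uniqueDiffOn_Icc hπ
  set γ' : ℝ → EuclideanSpace ℝ (Fin (n+1)) := fun t => derivWithin γ (Icc 0 π) t with hγ'def
  have hcont : ContinuousOn γ (Icc 0 π) := hγ.continuousOn
  have hdiff : ∀ t ∈ Icc 0 π, HasDerivWithinAt γ (γ' t) (Icc 0 π) t := fun t ht =>
    ((hγ.differentiableOn one_ne_zero) t ht).hasDerivWithinAt
  -- orthogonality of γ and γ'
  have horth : ∀ t ∈ Icc 0 π, ⟪γ t, γ' t⟫ = 0 := by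
    intro t ht
    have h1 : HasDerivWithinAt (fun s => ⟪γ s, γ s⟫) (⟪γ t, γ' t⟫ + ⟪γ' t, γ t⟫) (Icc 0 π) t :=
      (hdiff t ht).inner ℝ (hdiff t ht)
    have h2 : HasDerivWithinAt (fun s : ℝ => ⟪γ s, γ s⟫) 0 (Icc 0 π) t := by
      refine (hasDerivWithinAt_const t _ (1:ℝ)).congr (fun s hs => ?_) ?_
      · rw [real_inner_self_eq_norm_sq, hsphere s hs]; norm_num
      · rw [real_inner_self_eq_norm_sq, hsphere t ht]; norm_num
    have e1 := h1.derivWithin (hUD t ht)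
    have e2 := h2.derivWithin (hUD t ht)
    rw [e2] at e1
    have e3 : ⟪γ' t, γ t⟫ = ⟪γ t, γ' t⟫ := real_inner_comm _ _
    linarith
  -- the inner product with γ 0
  set h : ℝ → ℝ := fun s => ⟪γ 0, γ s⟫ with hhdef
  set h' : ℝ → ℝ := fun s => ⟪γ 0, γ' s⟫ with hh'def
  have hh : ∀ t ∈ Icc 0 π, HasDerivWithinAt h (h' t) (Icc 0 π) t := by
    intro t ht
    have := (hasDerivWithinAt_const t (Icc 0 π) (γ 0)).inner ℝ (hdiff t ht)
    simpa using this
  have hhcont : ContinuousOn h (Icc 0 π) := continuousOn_const.inner hcont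
  have hbound : ∀ t ∈ Icc 0 π, |h t| ≤ 1 := by
    intro t ht
    calc |h t| ≤ ‖γ 0‖ * ‖γ t‖ := abs_real_inner_le_norm _ _
    _ = 1 := by rw [hsphere 0 h0mem, hsphere t ht]; norm_num
  have hCS : ∀ t ∈ Icc 0 π, |h' t| ≤ Real.sqrt (1 - h t ^ 2) := by
    intro t ht
    have hrw : h' t = ⟪γ 0 - h t • γ t, γ' t⟫ := by
      rw [inner_sub_left, real_inner_smul_left, horth t ht]
      simp [hh'def]
    have hnorm : ‖γ 0 - h t • γ t‖ = Real.sqrt (1 - h t ^ 2) := by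
      rw [← Real.sqrt_sq (norm_nonneg _)]
      congr 1
      rw [norm_sub_sq_real, real_inner_smul_right, norm_smul, hsphere t ht, hsphere 0 h0mem]
      simp only [Real.norm_eq_abs, one_pow, mul_one]
      rw [sq_abs]
      have : ⟪γ 0, γ t⟫ = h t := rfl
      rw [this]
      ring
    calc |h' t| = |⟪γ 0 - h t • γ t, γ' t⟫| := by rw [hrw]
    _ ≤ ‖γ 0 - h t • γ t‖ * ‖γ' t‖ := abs_real_inner_le_norm _ _
    _ = Real.sqrt (1 - h t ^ 2) := by rw [hspeed t ht, hnorm]; ring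
  -- values at endpoints
  have hh0 : h 0 = 1 := by
    rw [hhdef]; simp only []
    rw [real_inner_self_eq_norm_sq, hsphere 0 h0mem]; norm_num
  have hhπ : h π = -1 := by
    rw [hhdef]; simp only [hanti, inner_neg_right]
    rw [real_inner_self_eq_norm_sq, hsphere 0 h0mem]; norm_num
  -- at interior points we have genuine derivatives
  have hhat : ∀ t ∈ Ioo 0 π, HasDerivAt h (h' t) t := fun t ht =>
    (hh t (Ioo_subset_Icc_self ht)).hasDerivAt (Icc_mem_nhds ht.1 ht.2)
  have hγat : ∀ t ∈ Ioo 0 π, HasDerivAt γ (γ' t) t := fun t ht =>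
    (hdiff t (Ioo_subset_Icc_self ht)).hasDerivAt (Icc_mem_nhds ht.1 ht.2)
  -- the angle function
  set θ : ℝ → ℝ := fun s => Real.arccos (h s) with hθdef
  have θcont : ContinuousOn θ (Icc 0 π) := Real.continuous_arccos.comp_continuousOn hhcont
  -- Lipschitz-type bound via MVT
  have key : ∀ a b : ℝ, 0 ≤ a → a < b → b ≤ π →
      (∀ x ∈ Ioo a b, h x ≠ 1 ∧ h x ≠ -1) → |θ b - θ a| ≤ b - a := by
    intro a b ha hab hb hne
    have hsub : Ioo a b ⊆ Ioo 0 π := Ioo_subset_Ioo ha hb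
    have hsubI : Icc a b ⊆ Icc 0 π := Icc_subset_Icc ha hb
    obtain ⟨c, hc, hslope⟩ := exists_hasDerivAt_eq_slope θ
        (fun x => -(1 / Real.sqrt (1 - h x ^ 2)) * h' x) hab (θcont.mono hsubI)
        (fun x hx => (Real.hasDerivAt_arccos (hne x hx).2 (hne x hx).1).comp x
          (hhat x (hsub hx)))
    have hcI : c ∈ Icc 0 π := Ioo_subset_Icc_self (hsub hc)
    have habs : |h c| < 1 := by
      rcases lt_or_eq_of_le (hbound c hcI) with h1 | h1
      · exact h1
      · exfalso
        rcases (abs_eq (by norm_num : (0:ℝ) ≤ 1)).mp h1 with h2 | h2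
        · exact (hne c hc).1 h2
        · exact (hne c hc).2 h2
    have hpos : 0 < Real.sqrt (1 - h c ^ 2) := by
      apply Real.sqrt_pos.mpr
      have h2 : |h c| ^ 2 < 1 := by nlinarith [abs_nonneg (h c)]
      rw [sq_abs] at h2
      linarith
    have hbnd : |(-(1 / Real.sqrt (1 - h c ^ 2)) * h' c)| ≤ 1 := by
      rw [abs_mul, abs_neg, abs_div, abs_one, abs_of_pos hpos]
      rw [div_mul_eq_mul_div, one_mul, div_le_one hpos]
      exact hCS c hcI
    have : |θ b - θ a| = |(-(1 / Real.sqrt (1 - h c ^ 2)) * h' c)| * (b - a) := by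
      rw [hslope, abs_div, abs_of_pos (sub_pos.mpr hab), div_mul_cancel₀]
      exact (sub_pos.mpr hab).ne'
    rw [this]
    calc |(-(1 / Real.sqrt (1 - h c ^ 2)) * h' c)| * (b - a) ≤ 1 * (b - a) :=
      mul_le_mul_of_nonneg_right hbnd (sub_pos.mpr hab).le
    _ = b - a := one_mul _
  -- the extremal points
  set A : Set ℝ := Icc 0 π ∩ h ⁻¹' {1} with hAdef
  have hA_closed : IsClosed A := hhcont.preimage_isClosed_of_isClosed isClosed_Icc
    isClosed_singleton
  have hA_ne : A.Nonempty := ⟨0, h0mem, hh0⟩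
  have hA_bdd : BddAbove A := ⟨π, fun x hx => hx.1.2⟩
  set t0 : ℝ := sSup A with ht0def
  have ht0A : t0 ∈ A := hA_closed.csSup_mem hA_ne hA_bdd
  set B : Set ℝ := Icc t0 π ∩ h ⁻¹' {-1} with hBdef
  have hB_closed : IsClosed B := (hhcont.mono (Icc_subset_Icc ht0A.1.1 le_rfl)
    ).preimage_isClosed_of_isClosed isClosed_Icc isClosed_singleton
  have hB_ne : B.Nonempty := ⟨π, ⟨ht0A.1.2, le_rfl⟩, hhπ⟩
  have hB_bdd : BddBelow B := ⟨t0, fun x hx => hx.1.1⟩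
  set t1 : ℝ := sInf B with ht1def
  have ht1B : t1 ∈ B := hB_closed.csInf_mem hB_ne hB_bdd
  have ht01 : t0 < t1 := by
    rcases lt_or_eq_of_le ht1B.1.1 with h1 | h1
    · exact h1
    · exfalso
      have e1 : h t0 = 1 := ht0A.2
      have e2 : h t1 = -1 := ht1B.2
      rw [← h1] at e2
      linarith
  have hmid : ∀ x ∈ Ioo t0 t1, h x ≠ 1 ∧ h x ≠ -1 := by
    intro x hx
    constructor
    · intro hx1
      have : x ∈ A := ⟨⟨ht0A.1.1.trans hx.1.le, hx.2.le.trans ht1B.1.2⟩, hx1⟩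
      exact absurd (le_csSup hA_bdd this) (not_le.mpr hx.1)
    · intro hx1
      have : x ∈ B := ⟨⟨hx.1.le, hx.2.le.trans ht1B.1.2⟩, hx1⟩
      exact absurd (csInf_le hB_bdd this) (not_le.mpr hx.2)
  have hθt0 : θ t0 = 0 := by rw [hθdef]; simp only []; rw [ht0A.2]; exact Real.arccos_one
  have hθt1 : θ t1 = π := by rw [hθdef]; simp only []; rw [ht1B.2]; exact Real.arccos_neg_one
  have hkey01 := key t0 t1 ht0A.1.1 ht01 ht1B.1.2 hmid
  rw [hθt0, hθt1, sub_zero, abs_of_pos hπ] at hkey01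
  have ht00 : t0 = 0 := by
    have := ht1B.1.2; have := ht0A.1.1; linarith
  have ht1π : t1 = π := by
    have := ht1B.1.2; have := ht0A.1.1; linarith
  rw [ht00] at hkey01 ht01 hmid
  rw [ht1π] at hmid
  -- θ t = t on the interior, hence h t = cos t
  have hθeq : ∀ t ∈ Ioo 0 π, θ t = t := by
    intro t ht
    have h1 := key 0 t le_rfl ht.1 ht.2.le (fun x hx => hmid x (Ioo_subset_Ioo le_rfl ht.2.le hx))
    have h2 := key t π ht.1.le ht.2 le_rfl (fun x hx => hmid x (Ioo_subset_Ioo ht.1.le le_rfl hx))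
    rw [hθdef] at h1 h2 ⊢
    simp only [] at h1 h2 ⊢
    rw [hh0, Real.arccos_one, sub_zero] at h1
    rw [hhπ, Real.arccos_neg_one] at h2
    have hb1 := abs_le.mp h1
    have hb2 := abs_le.mp h2
    linarith [hb1.2, hb2.2]
  have hcos : ∀ t ∈ Icc 0 π, h t = Real.cos t := by
    intro t ht
    rcases eq_or_lt_of_le ht.1 with h1 | h1
    · rw [← h1, hh0, Real.cos_zero]
    rcases eq_or_lt_of_le ht.2 with h2 | h2
    · rw [h2, hhπ, Real.cos_pi]
    have := hθeq t ⟨h1, h2⟩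
    rw [hθdef] at this
    simp only [] at this
    have hb := abs_le.mp (hbound t ht)
    calc h t = Real.cos (Real.arccos (h t)) := (Real.cos_arccos hb.1 hb.2).symm
    _ = Real.cos t := by rw [this]
  -- the derivative of h is -sin
  have hh' : ∀ t ∈ Ioo 0 π, h' t = -Real.sin t := by
    intro t ht
    have h1 : HasDerivAt h (h' t) t := hhat t ht
    have h2 : HasDerivAt Real.cos (h' t) t := by
      refine h1.congr_of_eventuallyEq ?_
      filter_upwards [Icc_mem_nhds ht.1 ht.2] with s hs
      exact (hcos s hs).symm
    exact h2.unique (Real.hasDerivAt_cos t)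
  -- Cauchy–Schwarz equality: the ODE
  have hode : ∀ t ∈ Ioo 0 π, Real.sin t • γ' t = Real.cos t • γ t - γ 0 := by
    intro t ht
    have htI : t ∈ Icc 0 π := Ioo_subset_Icc_self ht
    have hsin : 0 < Real.sin t := Real.sin_pos_of_pos_of_lt_pi ht.1 ht.2
    set u : EuclideanSpace ℝ (Fin (n+1)) := γ 0 - Real.cos t • γ t with hudef
    have hinner : ⟪u, -γ' t⟫ = Real.sin t := by
      rw [inner_neg_right, hudef, inner_sub_left, real_inner_smul_left, horth t htI]
      have : ⟪γ 0, γ' t⟫ = -Real.sin t := hh' t ht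
      rw [this]; ring
    have hnu : ‖u‖ = Real.sin t := by
      rw [← Real.sqrt_sq (norm_nonneg u), ← Real.sqrt_sq hsin.le]
      congr 1
      rw [hudef, norm_sub_sq_real, real_inner_smul_right, norm_smul, hsphere t htI,
        hsphere 0 h0mem]
      have hht : ⟪γ 0, γ t⟫ = Real.cos t := hcos t htI
      rw [hht]
      have := Real.sin_sq_add_cos_sq t
      simp only [Real.norm_eq_abs, mul_one, one_pow]
      rw [sq_abs]
      nlinarith
    have heq : ⟪u, -γ' t⟫ = ‖u‖ * ‖-γ' t‖ := by
      rw [hinner, hnu, norm_neg, hspeed t htI, mul_one]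
    have := inner_eq_norm_mul_iff_real.mp heq
    rw [norm_neg, hspeed t htI, hnu, one_smul] at this
    -- this : u = sin t • -γ' t
    rw [hudef, smul_neg] at this
    have h5 := neg_eq_iff_eq_neg.mpr this
    rw [← h5]; abel
  -- solve the ODE: z is constant on (0, π)
  set v : EuclideanSpace ℝ (Fin (n+1)) := γ (π/2) with hvdef
  set z : ℝ → EuclideanSpace ℝ (Fin (n+1)) :=
    fun s => (Real.sin s)⁻¹ • (γ s - Real.cos s • γ 0) with hzdef
  have hz' : ∀ t ∈ Ioo 0 π, HasDerivAt z 0 t := by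
    intro t ht
    have hsin : 0 < Real.sin t := Real.sin_pos_of_pos_of_lt_pi ht.1 ht.2
    have Hf : HasDerivAt (fun s => (Real.sin s)⁻¹) (-Real.cos t / Real.sin t ^ 2) t := by
      exact (Real.hasDerivAt_sin t).inv hsin.ne'
    have Hg : HasDerivAt (fun s => γ s - Real.cos s • γ 0)
        (γ' t - (-Real.sin t) • γ 0) t :=
      (hγat t ht).sub ((Real.hasDerivAt_cos t).smul_const (γ 0))
    have H := Hf.smul Hg
    have hγ't : γ' t = (Real.sin t)⁻¹ • (Real.cos t • γ t - γ 0) := by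
      rw [← hode t ht, smul_smul, inv_mul_cancel₀ hsin.ne', one_smul]
    have hzero : (Real.sin t)⁻¹ • (γ' t - (-Real.sin t) • γ 0) +
        (-Real.cos t / Real.sin t ^ 2) • (γ t - Real.cos t • γ 0) = 0 := by
      rw [hγ't]
      match_scalars
      · field_simp
        ring
      · field_simp
        nlinarith [Real.sin_sq_add_cos_sq t]
    rw [hzero] at H
    exact H
  have hzconst : ∀ t ∈ Ioo 0 π, z t = v := by
    have hπ2 : π/2 ∈ Ioo 0 π := ⟨by linarith, by linarith⟩
    have hzv : z (π/2) = v := by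
      show (Real.sin (π/2))⁻¹ • (γ (π/2) - Real.cos (π/2) • γ 0) = v
      rw [Real.sin_pi_div_two, Real.cos_pi_div_two, hvdef]
      simp
    intro t ht
    rcases le_or_gt t (π/2) with hle | hlt
    · rcases eq_or_lt_of_le hle with heq | hlt2
      · rw [heq, hzv]
      have hIcc : Icc t (π/2) ⊆ Ioo 0 π := fun x hx => ⟨lt_of_lt_of_le ht.1 hx.1,
        lt_of_le_of_lt hx.2 hπ2.2⟩
      have := constant_of_has_deriv_right_zero (f := z) (a := t) (b := π/2)
        (fun x hx => ((hz' x (hIcc hx)).continuousAt).continuousWithinAt)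
        (fun x hx => ((hz' x (hIcc ⟨hx.1, hx.2.le⟩)).hasDerivWithinAt))
      have h1 := this (π/2) ⟨hle, le_rfl⟩
      rw [hzv] at h1; exact h1.symm
    · have hIcc : Icc (π/2) t ⊆ Ioo 0 π := fun x hx => ⟨lt_of_lt_of_le hπ2.1 hx.1,
        lt_of_le_of_lt hx.2 ht.2⟩
      have := constant_of_has_deriv_right_zero (f := z) (a := π/2) (b := t)
        (fun x hx => ((hz' x (hIcc hx)).continuousAt).continuousWithinAt)
        (fun x hx => ((hz' x (hIcc ⟨hx.1, hx.2.le⟩)).hasDerivWithinAt))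
      have h1 := this t ⟨hlt.le, le_rfl⟩
      rw [hzv] at h1; exact h1
  -- the formula holds with v in place of γ'(0)
  have hmain : ∀ t ∈ Icc 0 π, γ t = Real.cos t • γ 0 + Real.sin t • v := by
    intro t ht
    rcases eq_or_lt_of_le ht.1 with h1 | h1
    · rw [← h1]; simp
    rcases eq_or_lt_of_le ht.2 with h2 | h2
    · rw [h2, hanti, Real.cos_pi, Real.sin_pi]; simp
    have hsin : 0 < Real.sin t := Real.sin_pos_of_pos_of_lt_pi h1 h2
    have := hzconst t ⟨h1, h2⟩
    rw [hzdef] at this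
    simp only [] at this
    have : γ t - Real.cos t • γ 0 = Real.sin t • v := by
      rw [← this, smul_smul, mul_inv_cancel₀ hsin.ne', one_smul]
    rw [← this]; abel
  -- identify v with the derivative at 0
  have hderiv0 : derivWithin γ (Icc 0 π) 0 = v := by
    have hc : HasDerivAt (fun s => Real.cos s • γ 0 + Real.sin s • v)
        ((-Real.sin 0) • γ 0 + Real.cos 0 • v) 0 :=
      ((Real.hasDerivAt_cos 0).smul_const (γ 0)).add ((Real.hasDerivAt_sin 0).smul_const v)
    have hc' : HasDerivWithinAt γ ((-Real.sin 0) • γ 0 + Real.cos 0 • v) (Icc 0 π) 0 := by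
      refine (hc.hasDerivWithinAt).congr (fun s hs => ?_) ?_
      · exact hmain s hs
      · exact hmain 0 h0mem
    have := hc'.derivWithin (hUD 0 h0mem)
    rw [this, Real.sin_zero, Real.cos_zero]
    simp
  intro t ht
  rw [hderiv0]
  exact hmain t ht
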